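/- If G is a finite nilpotent group whose order is divisible by at least two distinct primes, then the cyclic graph Δ(G) is connected. -/

import Mathlib

section Aux
open Subgroup

lemma zpowers_isCyclic' {G : Type*} [Group G] (g : G) : IsCyclic (zpowers g) := by
  refine ⟨⟨⟨g, mem_zpowers g⟩, fun x => ?_⟩⟩
  obtain ⟨k, hk⟩ := x.2
  exact ⟨k, Subtype.ext (by simpa using hk)⟩

lemma isCyclic_closure_of_eq_zpowers {G : Type*} [Group G] {s : Set G} {g : G}
    (h : Subgroup.closure s = zpowers g) : IsCyclic (Subgroup.closure s) := by
  rw [h]; exact zpowers_isCyclic' g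

lemma isCyclic_closure_pair_pow {G : Type*} [Group G] (x : G) (k : ℕ) :
    IsCyclic (Subgroup.closure ({x, x ^ k} : Set G)) := by
  refine isCyclic_closure_of_eq_zpowers (g := x) (le_antisymm ?_ ?_)
  · rw [Subgroup.closure_le]
    intro z hz
    simp only [Set.mem_insert_iff, Set.mem_singleton_iff] at hz
    rcases hz with rfl | rfl
    · exact mem_zpowers z
    · exact pow_mem (mem_zpowers x) k
  · rw [zpowers_eq_closure]
    exact Subgroup.closure_mono (by simp)

lemma isCyclic_closure_pair_of_commute {G : Type*} [Group G] {x y : G}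
    (h : Commute x y) (hc : Nat.Coprime (orderOf x) (orderOf y)) :
    IsCyclic (Subgroup.closure ({x, y} : Set G)) := by
  obtain ⟨k, hk1, hk2⟩ := Nat.chineseRemainder hc 1 0
  have hx : (x * y) ^ k = x := by
    rw [h.mul_pow]
    have h1 : x ^ k = x ^ 1 := pow_eq_pow_iff_modEq.mpr hk1
    have h2 : y ^ k = y ^ 0 := pow_eq_pow_iff_modEq.mpr hk2
    rw [h1, h2, pow_one, pow_zero, mul_one]
  obtain ⟨l, hl1, hl2⟩ := Nat.chineseRemainder hc 0 1
  have hy : (x * y) ^ l = y := by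
    rw [h.mul_pow]
    have h1 : x ^ l = x ^ 0 := pow_eq_pow_iff_modEq.mpr hl1
    have h2 : y ^ l = y ^ 1 := pow_eq_pow_iff_modEq.mpr hl2
    rw [h1, h2, pow_one, pow_zero, one_mul]
  have hxz : x ∈ zpowers (x * y) := ⟨(k : ℤ), by simpa using hx⟩
  have hyz : y ∈ zpowers (x * y) := ⟨(l : ℤ), by simpa using hy⟩
  refine isCyclic_closure_of_eq_zpowers (g := x * y) (le_antisymm ?_ ?_)
  · rw [Subgroup.closure_le]
    intro z hz
    simp only [Set.mem_insert_iff, Set.mem_singleton_iff] at hz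
    rcases hz with rfl | rfl
    · exact hxz
    · exact hyz
  · rw [zpowers_eq_closure]
    refine (Subgroup.closure_le _).mpr ?_
    rintro z hz
    simp only [Set.mem_singleton_iff] at hz
    subst hz
    exact mul_mem (Subgroup.subset_closure (by simp)) (Subgroup.subset_closure (by simp))

/-- In a finite nilpotent group, a `p`-element and a `q`-element commute for `p ≠ q`. -/
lemma commute_of_isPGroup_nilpotent {G : Type*} [Group G] [Fintype G]
    (hG : Group.IsNilpotent G) {p q : ℕ} (hp : p.Prime) (hq : q.Prime) (hpq : p ≠ q)
    {x y : G} (hx : IsPGroup p (zpowers x)) (hy : IsPGroup q (zpowers y)) :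
    Commute x y := by
  haveI : Fact p.Prime := ⟨hp⟩
  haveI : Fact q.Prime := ⟨hq⟩
  haveI : Group.IsNilpotent G := hG
  obtain ⟨P, hPx⟩ := hx.exists_le_sylow
  obtain ⟨Q, hQy⟩ := hy.exists_le_sylow
  have hnc : NormalizerCondition G := normalizerCondition_of_isNilpotent
  have hmax : ∀ H : Subgroup G, IsCoatom H → H.Normal :=
    fun H h => NormalizerCondition.normal_of_coatom H hnc h
  have hPn : (P : Subgroup G).Normal := Sylow.normal_of_all_max_subgroups_normal hmax P
  have hQn : (Q : Subgroup G).Normal := Sylow.normal_of_all_max_subgroups_normal hmax Q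
  have hxP : x ∈ (P : Subgroup G) := hPx (mem_zpowers x)
  have hyQ : y ∈ (Q : Subgroup G) := hQy (mem_zpowers y)
  have hdisj : (P : Subgroup G) ⊓ (Q : Subgroup G) = ⊥ := by
    rw [Subgroup.eq_bot_iff_forall]
    rintro z ⟨hzP, hzQ⟩
    obtain ⟨a, ha⟩ := P.2 ⟨z, hzP⟩
    obtain ⟨b, hb⟩ := Q.2 ⟨z, hzQ⟩
    have ha' : z ^ p ^ a = 1 := by
      have := congrArg (Subgroup.subtype _) ha; simpa using this
    have hb' : z ^ q ^ b = 1 := by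
      have := congrArg (Subgroup.subtype _) hb; simpa using this
    have h1 : orderOf z ∣ p ^ a := orderOf_dvd_of_pow_eq_one ha'
    have h2 : orderOf z ∣ q ^ b := orderOf_dvd_of_pow_eq_one hb'
    have hcop : Nat.Coprime (p ^ a) (q ^ b) :=
      Nat.Coprime.pow a b ((Nat.coprime_primes hp hq).mpr hpq)
    have : orderOf z = 1 := Nat.eq_one_of_dvd_coprimes hcop h1 h2
    exact orderOf_eq_one_iff.mp this
  have hc : x * y * x⁻¹ * y⁻¹ ∈ (P : Subgroup G) ⊓ (Q : Subgroup G) := by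
    constructor
    · have h1 : y * x⁻¹ * y⁻¹ ∈ (P : Subgroup G) := hPn.conj_mem x⁻¹ ((P : Subgroup G).inv_mem hxP) y
      have := (P : Subgroup G).mul_mem hxP h1
      exact (by simpa only [mul_assoc] using this : x * y * x⁻¹ * y⁻¹ ∈ (P : Subgroup G))
    · have h2 : x * y * x⁻¹ ∈ (Q : Subgroup G) := hQn.conj_mem y hyQ x
      exact mul_mem h2 ((Q : Subgroup G).inv_mem hyQ)
  rw [hdisj, Subgroup.mem_bot] at hc
  have h3 : x * y * x⁻¹ = y := by
    have := mul_eq_one_iff_eq_inv.mp hc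
    simpa using this
  have : x * y = y * x := by
    calc x * y = (x * y * x⁻¹) * x := by group
      _ = y * x := by rw [h3]
  exact this

lemma isPGroup_zpowers_of_orderOf_eq {G : Type*} [Group G] {p n : ℕ} {x : G}
    (h : orderOf x = p ^ n) : IsPGroup p (Subgroup.zpowers x) :=
  IsPGroup.of_card (by rw [Nat.card_zpowers, h])

end Aux

/-- The cyclic graph `Δ(G)`: vertices are the nonidentity elements of `G`,
with distinct `x` and `y` adjacent iff `⟨x, y⟩` is cyclic. -/
def cyclicGraph (G : Type*) [Group G] : SimpleGraph {x : G // x ≠ 1} where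
  Adj x y := x ≠ y ∧ IsCyclic ↥(Subgroup.closure ({(x : G), (y : G)} : Set G))
  symm := ⟨by
    rintro x y ⟨hne, hcyc⟩
    refine ⟨hne.symm, ?_⟩
    rwa [Set.pair_comm]⟩
  loopless := ⟨fun x h => h.1 rfl⟩

/-- `H` is a Frobenius complement of `K` in `L` (all subgroups of an ambient group `G`):
`H ≤ L`, `H` is nontrivial, `L = KH`, `K ⊓ H = 1`, and `C_K(h) = 1` for all `1 ≠ h ∈ H`. -/
def IsFrobeniusComplementIn {G : Type*} [Group G] (K L H : Subgroup G) : Prop :=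
  H ≤ L ∧ H ≠ ⊥ ∧ (∀ x ∈ L, ∃ k ∈ K, ∃ h ∈ H, x = k * h) ∧ K ⊓ H = ⊥ ∧
    ∀ h ∈ H, h ≠ 1 → ∀ k ∈ K, Commute h k → k = 1

/-- `G` is a Frobenius group with kernel `K` and complement `H`. -/
def IsFrobenius (G : Type*) [Group G] (K H : Subgroup G) : Prop :=
  K.Normal ∧ K ≠ ⊥ ∧ IsFrobeniusComplementIn K ⊤ H

/-- `G` is a 2-Frobenius group with respect to the normal subgroups `K ≤ L`:
`L` is a Frobenius group with kernel `K` (and some complement), and `G/K` is a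
Frobenius group with kernel `L/K` (and some complement). -/
def Is2Frobenius (G : Type*) [Group G] (K L : Subgroup G) [K.Normal] [L.Normal] : Prop :=
  K ≠ ⊥ ∧ K < L ∧
    (∃ H : Subgroup G, IsFrobeniusComplementIn K L H) ∧
    (∃ C : Subgroup (G ⧸ K),
      IsFrobeniusComplementIn (L.map (QuotientGroup.mk' K)) ⊤ C)

open Subgroup in
theorem cyclicGraph_nilpotent_connected
    {G : Type*} [Group G] [Fintype G] (hG : Group.IsNilpotent G)
    (hpq : ∃ p q : ℕ, p.Prime ∧ q.Prime ∧ p ≠ q ∧ p ∣ Nat.card G ∧ q ∣ Nat.card G) :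
    (cyclicGraph G).Connected := by
  obtain ⟨p, q, hp, hq, hpq, hpd, hqd⟩ := hpq
  haveI : Fact p.Prime := ⟨hp⟩
  haveI : Fact q.Prime := ⟨hq⟩
  rw [Nat.card_eq_fintype_card] at hpd hqd
  obtain ⟨a, ha⟩ := exists_prime_orderOf_dvd_card p hpd
  obtain ⟨b, hb⟩ := exists_prime_orderOf_dvd_card q hqd
  have ha1 : a ≠ 1 := by
    intro h; rw [h, orderOf_one] at ha; exact hp.one_lt.ne' ha.symm
  have hb1 : b ≠ 1 := by
    intro h; rw [h, orderOf_one] at hb; exact hq.one_lt.ne' hb.symm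
  set A : {x : G // x ≠ 1} := ⟨a, ha1⟩ with hA
  set B : {x : G // x ≠ 1} := ⟨b, hb1⟩ with hB
  have haP : IsPGroup p (zpowers a) := isPGroup_zpowers_of_orderOf_eq (n := 1) (by simpa using ha)
  have hbQ : IsPGroup q (zpowers b) := isPGroup_zpowers_of_orderOf_eq (n := 1) (by simpa using hb)
  have hcomm_ab : Commute a b := commute_of_isPGroup_nilpotent hG hp hq hpq haP hbQ
  have hab_cop : Nat.Coprime (orderOf a) (orderOf b) := by
    rw [ha, hb]; exact (Nat.coprime_primes hp hq).mpr hpq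
  have hAB : (cyclicGraph G).Adj A B := by
    refine ⟨?_, isCyclic_closure_pair_of_commute hcomm_ab hab_cop⟩
    intro h
    apply hpq
    rw [← ha, ← hb]
    exact congrArg (fun v : {x : G // x ≠ 1} => orderOf v.1) h
  have key : ∀ v : {x : G // x ≠ 1}, (cyclicGraph G).Reachable v A := by
    rintro ⟨x, hx1⟩
    set n := orderOf x with hn
    have hn0 : n ≠ 0 := (orderOf_pos x).ne'
    have hn1 : n ≠ 1 := by
      intro h; exact hx1 (orderOf_eq_one_iff.mp h)
    by_cases hcase : ∃ r, r.Prime ∧ r ≠ p ∧ r ∣ n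
    · obtain ⟨r, hr, hrp, hrn⟩ := hcase
      set y := x ^ (n / r) with hy
      have hoy : orderOf y = r := by
        rw [hy, orderOf_pow, ← hn, Nat.gcd_eq_right (Nat.div_dvd_of_dvd hrn),
          Nat.div_div_self hrn hn0]
      have hy1 : y ≠ 1 := by
        intro h; rw [h, orderOf_one] at hoy; exact hr.one_lt.ne' hoy.symm
      set Y : {x : G // x ≠ 1} := ⟨y, hy1⟩ with hY
      have hyP : IsPGroup r (zpowers y) :=
        isPGroup_zpowers_of_orderOf_eq (n := 1) (by simpa using hoy)
      have hcomm_ya : Commute y a := commute_of_isPGroup_nilpotent hG hr hp hrp hyP haP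
      have hya_cop : Nat.Coprime (orderOf y) (orderOf a) := by
        rw [hoy, ha]; exact (Nat.coprime_primes hr hp).mpr hrp
      have hYA : (cyclicGraph G).Adj Y A := by
        refine ⟨?_, isCyclic_closure_pair_of_commute hcomm_ya hya_cop⟩
        intro h
        apply hrp
        rw [← hoy, ← ha]
        exact congrArg (fun v : {x : G // x ≠ 1} => orderOf v.1) h
      by_cases hxy : (⟨x, hx1⟩ : {x : G // x ≠ 1}) = Y
      · rw [hxy]; exact hYA.reachable
      · have hXY : (cyclicGraph G).Adj ⟨x, hx1⟩ Y :=
          ⟨hxy, isCyclic_closure_pair_pow x (n / r)⟩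
        exact (hXY.reachable).trans hYA.reachable
    · push_neg at hcase
      have hxP : IsPGroup p (zpowers x) := by
        refine isPGroup_zpowers_of_orderOf_eq (n := n.primeFactorsList.length) ?_
        rw [← hn]
        exact Nat.eq_prime_pow_of_unique_prime_dvd hn0
          (fun {d} hd hdn => by_contra fun hne => (hcase d hd hne hdn).elim)
      have hcomm_xb : Commute x b := commute_of_isPGroup_nilpotent hG hp hq hpq hxP hbQ
      have hqn : ¬ q ∣ n := fun h => hcase q hq (Ne.symm hpq) h
      have hXB : (cyclicGraph G).Adj ⟨x, hx1⟩ B := by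
        refine ⟨?_, isCyclic_closure_pair_of_commute hcomm_xb ?_⟩
        · intro h
          apply hqn
          have : orderOf x = orderOf b := congrArg (fun v : {x : G // x ≠ 1} => orderOf v.1) h
          rw [← hn, hb] at this
          rw [this]
        · rw [← hn, hb]
          exact Nat.Coprime.symm (Nat.Prime.coprime_iff_not_dvd hq |>.mpr hqn)
      exact hXB.reachable.trans hAB.symm.reachable
  rw [SimpleGraph.connected_iff]
  exact ⟨fun u v => (key u).trans (key v).symm, ⟨A⟩⟩
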